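/- Let H and H' be Hermitian n×n matrices with respective increasingly ordered eigenvalues λ_k and λ'_k. Then for every k, |λ_k − λ'_k| ≤ ‖H − H'‖, the operator norm of the difference. Consequently, a naive gap estimate from a perturbed matrix can overestimate the true gap λ_{N+1} − λ_N by at most 2‖H − H'‖. -/

import Mathlib

/-- The matrix-vector product, viewed as an operation on Euclidean space. -/
noncomputable def matVec {n : ℕ} (H : Matrix (Fin n) (Fin n) ℂ)
    (u : EuclideanSpace ℂ (Fin n)) : EuclideanSpace ℂ (Fin n) :=
  WithLp.toLp 2 (H.mulVec u)

open Finset in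
lemma matVec_sum_smul {n : ℕ} (H : Matrix (Fin n) (Fin n) ℂ)
    (c : Fin n → ℂ) (v : Fin n → EuclideanSpace ℂ (Fin n)) :
    matVec H (∑ i, c i • v i) = ∑ i, c i • matVec H (v i) := by
  have : ∀ u : EuclideanSpace ℂ (Fin n), matVec H u = WithLp.toLp 2 (H.mulVecLin u.ofLp) := fun u => rfl
  simp only [this]
  rw [WithLp.ofLp_sum, map_sum]
  simp

open Finset in
lemma rayleigh_eq {n : ℕ} (H : Matrix (Fin n) (Fin n) ℂ)
    (b : OrthonormalBasis (Fin n) ℂ (EuclideanSpace ℂ (Fin n))) (μ : Fin n → ℝ)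
    (hb : ∀ i, matVec H (b i) = (μ i : ℂ) • b i) (x : EuclideanSpace ℂ (Fin n)) :
    RCLike.re (inner ℂ x (matVec H x) : ℂ) = ∑ i, μ i * ‖(inner ℂ (b i) x : ℂ)‖ ^ 2 := by
  have hx : matVec H x = ∑ i, (inner ℂ (b i) x : ℂ) • ((μ i : ℂ) • b i) := by
    conv_lhs => rw [← b.sum_repr' x]
    rw [matVec_sum_smul]
    simp only [hb]
  rw [hx, inner_sum]
  simp only [inner_smul_right]
  rw [map_sum]
  congr 1
  ext i
  have h1 : (inner ℂ x (b i) : ℂ) = starRingEnd ℂ (inner ℂ (b i) x) := (inner_conj_symm _ _).symm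
  rw [h1]
  set c : ℂ := inner ℂ (b i) x with hc
  have : c * ((μ i : ℂ) * starRingEnd ℂ c) = ((μ i * ‖c‖ ^ 2 : ℝ) : ℂ) := by
    rw [mul_comm c, mul_assoc, mul_comm _ c, Complex.mul_conj, Complex.normSq_eq_norm_sq]
    push_cast
    ring
  rw [this]
  exact RCLike.ofReal_re _

lemma inner_basis_eq_zero_of_mem_span {n : ℕ}
    (b : OrthonormalBasis (Fin n) ℂ (EuclideanSpace ℂ (Fin n)))
    (s : Set (Fin n)) {i : Fin n} (hi : i ∉ s) {x : EuclideanSpace ℂ (Fin n)}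
    (hx : x ∈ Submodule.span ℂ (b '' s)) :
    (inner ℂ (b i) x : ℂ) = 0 := by
  induction hx using Submodule.span_induction with
  | mem y hy =>
    obtain ⟨j, hj, rfl⟩ := hy
    exact b.orthonormal.2 (fun h => hi (h ▸ hj))
  | zero => exact inner_zero_right _
  | add y z _ _ hy hz => rw [inner_add_right, hy, hz, add_zero]
  | smul c y _ hy => rw [inner_smul_right, hy, mul_zero]

lemma finrank_span_basis_image {n : ℕ}
    (b : OrthonormalBasis (Fin n) ℂ (EuclideanSpace ℂ (Fin n))) (s : Finset (Fin n)) :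
    Module.finrank ℂ (Submodule.span ℂ (b '' (s : Set (Fin n)))) = s.card := by
  have hli : LinearIndependent ℂ (fun i : {x // x ∈ s} => b i) :=
    b.orthonormal.linearIndependent.comp _ Subtype.val_injective
  have h := finrank_span_eq_card hli
  have hr : Set.range (fun i : {x // x ∈ s} => b i) = b '' (s : Set (Fin n)) := by
    ext y
    simp [Set.mem_image]
  rwa [hr, Fintype.card_coe] at h

lemma norm_sq_eq_sum_inner {n : ℕ}
    (b : OrthonormalBasis (Fin n) ℂ (EuclideanSpace ℂ (Fin n)))
    (x : EuclideanSpace ℂ (Fin n)) :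
    ‖x‖ ^ 2 = ∑ i, ‖(inner ℂ (b i) x : ℂ)‖ ^ 2 := by
  have h := rayleigh_eq (1 : Matrix (Fin n) (Fin n) ℂ) b (fun _ => 1)
    (fun i => by simp [matVec, Matrix.one_mulVec]) x
  have h1 : matVec (1 : Matrix (Fin n) (Fin n) ℂ) x = x := by
    simp [matVec, Matrix.one_mulVec]
  rw [h1, inner_self_eq_norm_sq] at h
  simpa using h

lemma weyl_one_sided (n : ℕ)
    (H H' : Matrix (Fin n) (Fin n) ℂ) (hH : H.IsHermitian) (hH' : H'.IsHermitian)
    (lam lam' : Fin n → ℝ)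
    (hlam_mono : Monotone lam) (hlam : ∃ σ : Equiv.Perm (Fin n), lam = hH.eigenvalues ∘ σ)
    (hlam'_mono : Monotone lam')
    (hlam' : ∃ σ : Equiv.Perm (Fin n), lam' = hH'.eigenvalues ∘ σ)
    (ε : ℝ) (hε : ∀ x : EuclideanSpace ℂ (Fin n), ‖matVec (H - H') x‖ ≤ ε * ‖x‖)
    (k : Fin n) : lam k ≤ lam' k + ε := by
  obtain ⟨σ, rfl⟩ := hlam
  obtain ⟨σ', rfl⟩ := hlam'
  set b : OrthonormalBasis (Fin n) ℂ (EuclideanSpace ℂ (Fin n)) :=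
    hH.eigenvectorBasis.reindex σ.symm with hbdef
  set b' : OrthonormalBasis (Fin n) ℂ (EuclideanSpace ℂ (Fin n)) :=
    hH'.eigenvectorBasis.reindex σ'.symm with hb'def
  have hb : ∀ i, matVec H (b i) = (((hH.eigenvalues ∘ σ) i : ℝ) : ℂ) • b i := by
    intro i
    have hcoe : b i = hH.eigenvectorBasis (σ i) := by
      simp [hbdef, OrthonormalBasis.reindex_apply]
    rw [hcoe]
    ext j
    simp only [matVec, WithLp.ofLp_toLp]
    rw [hH.mulVec_eigenvectorBasis]
    simp [Complex.real_smul]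
  have hb' : ∀ i, matVec H' (b' i) = (((hH'.eigenvalues ∘ σ') i : ℝ) : ℂ) • b' i := by
    intro i
    have hcoe : b' i = hH'.eigenvectorBasis (σ' i) := by
      simp [hb'def, OrthonormalBasis.reindex_apply]
    rw [hcoe]
    ext j
    simp only [matVec, WithLp.ofLp_toLp]
    rw [hH'.mulVec_eigenvectorBasis]
    simp [Complex.real_smul]
  set lam := hH.eigenvalues ∘ σ with hlamdef
  set lam' := hH'.eigenvalues ∘ σ' with hlam'def
  -- subspaces
  set E := Submodule.span ℂ (b' '' ((Finset.Iic k : Finset (Fin n)) : Set (Fin n))) with hEdef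
  set F := Submodule.span ℂ (b '' ((Finset.Ici k : Finset (Fin n)) : Set (Fin n))) with hFdef
  have hEr : Module.finrank ℂ E = (k : ℕ) + 1 := by
    rw [hEdef, finrank_span_basis_image, Fin.card_Iic]
  have hFr : Module.finrank ℂ F = n - (k : ℕ) := by
    rw [hFdef, finrank_span_basis_image, Fin.card_Ici]
  have hsum : Module.finrank ℂ (E ⊔ F : Submodule ℂ (EuclideanSpace ℂ (Fin n)))
      + Module.finrank ℂ (E ⊓ F : Submodule ℂ (EuclideanSpace ℂ (Fin n))) = n + 1 := by
    rw [Submodule.finrank_sup_add_finrank_inf_eq, hEr, hFr]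
    have := k.isLt
    omega
  have htop : Module.finrank ℂ (E ⊔ F : Submodule ℂ (EuclideanSpace ℂ (Fin n))) ≤ n := by
    have h1 := Submodule.finrank_le (E ⊔ F)
    simpa using h1
  have hpos : 0 < Module.finrank ℂ (E ⊓ F : Submodule ℂ (EuclideanSpace ℂ (Fin n))) := by omega
  obtain ⟨x, hxmem, hx0⟩ : ∃ x, x ∈ E ⊓ F ∧ x ≠ 0 := by
    obtain ⟨x, hx1, hx2⟩ := Submodule.exists_mem_ne_zero_of_ne_bot (p := E ⊓ F)
      (fun hbot => by rw [hbot, finrank_bot] at hpos; omega)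
    exact ⟨x, hx1, hx2⟩
  have hxE : x ∈ E := hxmem.1
  have hxF : x ∈ F := hxmem.2
  have hS : (0 : ℝ) < ‖x‖ ^ 2 := by have := norm_pos_iff.mpr hx0; positivity
  -- Rayleigh bounds
  have hray := rayleigh_eq H b lam hb x
  have hray' := rayleigh_eq H' b' lam' hb' x
  have hnx : ‖x‖ ^ 2 = ∑ i, ‖(inner ℂ (b i) x : ℂ)‖ ^ 2 := norm_sq_eq_sum_inner b x
  have hnx' : ‖x‖ ^ 2 = ∑ i, ‖(inner ℂ (b' i) x : ℂ)‖ ^ 2 := norm_sq_eq_sum_inner b' x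
  have hlow : lam k * ‖x‖ ^ 2 ≤ RCLike.re (inner ℂ x (matVec H x) : ℂ) := by
    rw [hray, hnx, Finset.mul_sum]
    apply Finset.sum_le_sum
    intro i _
    by_cases hik : k ≤ i
    · exact mul_le_mul_of_nonneg_right (hlam_mono hik) (by positivity)
    · have : (inner ℂ (b i) x : ℂ) = 0 := by
        refine inner_basis_eq_zero_of_mem_span b _ ?_ hxF
        simp only [Finset.coe_Ici, Set.mem_Ici]
        exact hik
      rw [this]
      simp
  have hhigh : RCLike.re (inner ℂ x (matVec H' x) : ℂ) ≤ lam' k * ‖x‖ ^ 2 := by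
    rw [hray', hnx', Finset.mul_sum]
    apply Finset.sum_le_sum
    intro i _
    by_cases hik : i ≤ k
    · exact mul_le_mul_of_nonneg_right (hlam'_mono hik) (by positivity)
    · have : (inner ℂ (b' i) x : ℂ) = 0 := by
        refine inner_basis_eq_zero_of_mem_span b' _ ?_ hxE
        simp only [Finset.coe_Iic, Set.mem_Iic]
        exact hik
      rw [this]
      simp
  -- perturbation bound
  have hsplit : matVec H x = matVec H' x + matVec (H - H') x := by
    ext j
    simp [matVec, Matrix.sub_mulVec]
  have hpert : RCLike.re (inner ℂ x (matVec (H - H') x) : ℂ) ≤ ε * ‖x‖ ^ 2 := by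
    calc RCLike.re (inner ℂ x (matVec (H - H') x) : ℂ)
        ≤ ‖(inner ℂ x (matVec (H - H') x) : ℂ)‖ := RCLike.re_le_norm _
      _ ≤ ‖x‖ * ‖matVec (H - H') x‖ := norm_inner_le_norm _ _
      _ ≤ ‖x‖ * (ε * ‖x‖) := mul_le_mul_of_nonneg_left (hε x) (norm_nonneg _)
      _ = ε * ‖x‖ ^ 2 := by ring
  have hre : RCLike.re (inner ℂ x (matVec H x) : ℂ)
      = RCLike.re (inner ℂ x (matVec H' x) : ℂ) + RCLike.re (inner ℂ x (matVec (H - H') x) : ℂ) := by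
    rw [hsplit, inner_add_right, map_add]
  have : lam k * ‖x‖ ^ 2 ≤ (lam' k + ε) * ‖x‖ ^ 2 := by
    calc lam k * ‖x‖ ^ 2 ≤ RCLike.re (inner ℂ x (matVec H x) : ℂ) := hlow
      _ = _ + _ := hre
      _ ≤ lam' k * ‖x‖ ^ 2 + ε * ‖x‖ ^ 2 := add_le_add hhigh hpert
      _ = (lam' k + ε) * ‖x‖ ^ 2 := by ring
  exact le_of_mul_le_mul_right this hS

/-- **Weyl's eigenvalue perturbation inequality.** Let `H` and `H'` be Hermitian matrices
with increasingly sorted eigenvalues `lam` and `lam'`, and let `ε` bound the operator norm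
of `H − H'` (i.e. `‖(H − H') x‖ ≤ ε ‖x‖` for all `x`).  Then `|lam k − lam' k| ≤ ε` for
every `k`; consequently the naive gap estimate `lam'_{N+1} − lam'_N` differs from the true
gap `lam_{N+1} − lam_N` by at most `2ε`. -/
theorem weyl_perturbation (n : ℕ)
    (H H' : Matrix (Fin n) (Fin n) ℂ) (hH : H.IsHermitian) (hH' : H'.IsHermitian)
    (lam lam' : Fin n → ℝ)
    (hlam_mono : Monotone lam) (hlam : ∃ σ : Equiv.Perm (Fin n), lam = hH.eigenvalues ∘ σ)
    (hlam'_mono : Monotone lam')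
    (hlam' : ∃ σ : Equiv.Perm (Fin n), lam' = hH'.eigenvalues ∘ σ)
    (ε : ℝ) (hε : ∀ x : EuclideanSpace ℂ (Fin n), ‖matVec (H - H') x‖ ≤ ε * ‖x‖) :
    (∀ i, |lam i - lam' i| ≤ ε) ∧
      ∀ N : ℕ, ∀ h : N + 1 < n,
        |(lam ⟨N + 1, h⟩ - lam ⟨N, by omega⟩) - (lam' ⟨N + 1, h⟩ - lam' ⟨N, by omega⟩)| ≤
          2 * ε := by
  have hε' : ∀ x : EuclideanSpace ℂ (Fin n), ‖matVec (H' - H) x‖ ≤ ε * ‖x‖ := by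
    intro x
    have hneg : matVec (H' - H) x = -(matVec (H - H') x) := by
      ext j
      simp [matVec, Matrix.sub_mulVec]
    rw [hneg, norm_neg]
    exact hε x
  have habs : ∀ i, |lam i - lam' i| ≤ ε := by
    intro i
    have h1 := weyl_one_sided n H H' hH hH' lam lam' hlam_mono hlam hlam'_mono hlam' ε hε i
    have h2 := weyl_one_sided n H' H hH' hH lam' lam hlam'_mono hlam' hlam_mono hlam ε hε' i
    exact abs_le.mpr ⟨by linarith, by linarith⟩
  refine ⟨habs, ?_⟩
  intro N h
  obtain ⟨a1, a2⟩ := abs_le.mp (habs ⟨N + 1, h⟩)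
  obtain ⟨b1, b2⟩ := abs_le.mp (habs ⟨N, by omega⟩)
  rw [abs_le]
  constructor <;> [nlinarith; nlinarith]
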